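/- Let p ≥ 2 be an integer and let α₁, …, α_t ∈ {1, …, p} (with t ≥ 1). Let s = (∑_{i=1}^t α_i) mod p. Then ∑_{i=1}^t α_i (p − α_i) ≥ s (p − s). -/
import Mathlib

lemma key_mod (p a b : ℤ) (hp : 2 ≤ p) (ha0 : 0 ≤ a) (hap : a < p)
    (hb1 : 1 ≤ b) (hbp : b ≤ p) :
    ((a + b) % p) * (p - (a + b) % p) ≤ a * (p - a) + b * (p - b) := by
  rcases lt_or_ge (a + b) p with h | h
  · rw [Int.emod_eq_of_lt (by linarith) h]
    nlinarith
  · have h1 : (a + b) % p = a + b - p := by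
      conv_lhs => rw [show a + b = (a + b - p) + p * 1 by ring]
      rw [Int.add_mul_emod_self_left, Int.emod_eq_of_lt (by linarith) (by linarith)]
    rw [h1]
    nlinarith [mul_nonneg (sub_nonneg.2 hap.le) (sub_nonneg.2 hbp)]

lemma main_aux (p : ℤ) (hp : 2 ≤ p) (t : ℕ) (α : Fin t → ℤ)
    (hα : ∀ i, 1 ≤ α i ∧ α i ≤ p) :
    ((∑ i, α i) % p) * (p - (∑ i, α i) % p) ≤ ∑ i, α i * (p - α i) := by
  induction t with
  | zero => simp
  | succ n ih =>
    have hpos : 0 < p := by linarith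
    rw [Fin.sum_univ_castSucc (f := α), Fin.sum_univ_castSucc (f := fun i => α i * (p - α i))]
    set S := ∑ i : Fin n, α i.castSucc with hS
    have hIH := ih (fun i => α i.castSucc) (fun i => hα _)
    set a := S % p with ha
    have ha0 : 0 ≤ a := Int.emod_nonneg _ (by linarith)
    have hap : a < p := Int.emod_lt_of_pos _ hpos
    set b := α (Fin.last n) with hb
    have hmod : (S + b) % p = (a + b) % p := by
      rw [ha, Int.emod_add_emod]
    rw [hmod]
    have := key_mod p a b hp ha0 hap (hα (Fin.last n)).1 (hα (Fin.last n)).2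
    linarith

/-- For an integer `p ≥ 2` and integers `α i ∈ [1, p]`, with `s` the residue of the
sum of the `α i` modulo `p`, we have `∑ α i * (p - α i) ≥ s * (p - s)`. -/
theorem stmt_0 (p : ℤ) (hp : 2 ≤ p) (t : ℕ) (ht : 1 ≤ t) (α : Fin t → ℤ)
    (hα : ∀ i, 1 ≤ α i ∧ α i ≤ p) (s : ℤ) (hs : s = (∑ i, α i) % p) :
    s * (p - s) ≤ ∑ i, α i * (p - α i) := by
  subst hs; exact main_aux p hp t α hα
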